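/- Let γ ≥ 1, b > 0, and let Ṽ : (0,b) → ℝ be measurable with ∫₀^b t·|Ṽ(t)| dt < ∞. Define recursively θ₀(x) = x^{1/2-γ} and θ_k(x) = (1/(2γ)) ∫_{x₀}^x [x^{1/2+γ} t^{1/2-γ} - x^{1/2-γ} t^{1/2+γ}] Ṽ(t) θ_{k-1}(t) dt for k ≥ 1 and x₀ ∈ (0,b). Then for all x ∈ (0,x₀) and k ≥ 0, |θ_k(x)| ≤ x^{1/2-γ} · (1/k!) · ((1/(2γ)) ∫₀^{x₀} t|Ṽ(t)| dt)^k. -/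

import Mathlib

open MeasureTheory Set intervalIntegral


lemma volterra_key (f : ℝ → ℝ) (hm : Measurable f) (hf : Integrable f)
    (h0 : ∀ t, 0 ≤ f t) (x₀ : ℝ) :
    ∀ k : ℕ, ∀ x ≤ x₀,
      ∫ t in Ioc x x₀, f t * (∫ s in Ioc t x₀, f s) ^ k
        = (∫ t in Ioc x x₀, f t) ^ (k + 1) / (k + 1) := by
  set A : ℝ → ℝ := fun t => ∫ s in Ioc t x₀, f s with hA
  have hanti : Antitone A := by
    intro t₁ t₂ h
    exact setIntegral_mono_set (hf.integrableOn)
      (Filter.Eventually.of_forall h0) (HasSubset.Subset.eventuallyLE (Ioc_subset_Ioc_left h))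
  have hAmeas : Measurable A := hanti.measurable
  have hA0 : ∀ t, 0 ≤ A t := fun t => setIntegral_nonneg measurableSet_Ioc fun s _ => h0 s
  have hAbd : ∀ t, A t ≤ ∫ s, f s := fun t =>
    setIntegral_le_integral hf (Filter.Eventually.of_forall h0)
  have hIk : ∀ (k : ℕ) (x : ℝ), IntegrableOn (fun t => f t * A t ^ k) (Ioc x x₀) := by
    intro k x
    have := (hf.integrableOn (s := Ioc x x₀)).bdd_mul
      (f := fun t => A t ^ k) ((hAmeas.pow_const k).aestronglyMeasurable)
      (c := (∫ s, f s) ^ k) (Filter.Eventually.of_forall fun t => by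
        rw [Real.norm_eq_abs, abs_pow, abs_of_nonneg (hA0 t)]
        exact pow_le_pow_left₀ (hA0 t) (hAbd t) k)
    exact this.congr (Filter.Eventually.of_forall fun t => mul_comm _ _)
  intro k
  induction k with
  | zero => intro x hx; simp
  | succ k ih =>
    intro x hx
    set μ := volume.restrict (Ioc x x₀) with hμ
    set F : ℝ × ℝ → ℝ := fun p =>
      (f p.1 * A p.1 ^ k) * f p.2 * {p : ℝ × ℝ | p.1 < p.2}.indicator (fun _ => (1:ℝ)) p with hF
    have hFmeas : Measurable F := by
      apply Measurable.mul
      · exact ((hm.comp measurable_fst).mul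
          ((hAmeas.comp measurable_fst).pow_const k)).mul (hm.comp measurable_snd)
      · exact (measurable_const.indicator (measurableSet_lt measurable_fst measurable_snd))
    have hFint : Integrable F (μ.prod μ) := by
      have hbase : Integrable (fun p : ℝ × ℝ => (f p.1 * (∫ s, f s) ^ k) * f p.2) (μ.prod μ) :=
        Integrable.mul_prod ((hf.integrableOn).mul_const _) hf.integrableOn
      refine hbase.mono' hFmeas.aestronglyMeasurable ?_
      refine Filter.Eventually.of_forall fun p => ?_
      rw [Real.norm_eq_abs, hF]
      simp only
      rw [abs_mul, abs_mul]
      have h1 : |f p.1| * |A p.1 ^ k| ≤ f p.1 * (∫ s, f s) ^ k := by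
        rw [abs_of_nonneg (h0 _), abs_pow, abs_of_nonneg (hA0 _)]
        exact mul_le_mul_of_nonneg_left (pow_le_pow_left₀ (hA0 _) (hAbd _) k) (h0 _)
      have h2 : |{p : ℝ × ℝ | p.1 < p.2}.indicator (fun _ => (1:ℝ)) p| ≤ 1 := by
        by_cases h : p ∈ {p : ℝ × ℝ | p.1 < p.2} <;> simp [indicator_of_mem, h]
      calc |f p.1 * A p.1 ^ k| * |f p.2| * |{p : ℝ × ℝ | p.1 < p.2}.indicator (fun _ => (1:ℝ)) p|
          ≤ |f p.1 * A p.1 ^ k| * |f p.2| * 1 :=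
            mul_le_mul_of_nonneg_left h2 (by positivity)
        _ = |f p.1 * A p.1 ^ k| * |f p.2| := mul_one _
        _ ≤ (f p.1 * (∫ s, f s) ^ k) * f p.2 := by
            rw [abs_mul, abs_of_nonneg (h0 p.2)]
            exact mul_le_mul_of_nonneg_right h1 (h0 _)
    -- left iterated integral equals the target integral
    have hleft : (∫ t, (∫ s, F (t, s) ∂μ) ∂μ) = ∫ t in Ioc x x₀, f t * A t ^ (k + 1) := by
      rw [hμ]
      refine setIntegral_congr_fun measurableSet_Ioc fun t ht => ?_
      have hre : ∀ s, F (t, s) = (f t * A t ^ k) * ((Ioi t).indicator f s) := by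
        intro s
        rw [hF]
        simp only
        by_cases h : t < s
        · rw [indicator_of_mem (by exact h), indicator_of_mem (by exact h)]
          ring
        · rw [indicator_of_notMem (by exact h), indicator_of_notMem (by exact h)]
          ring
      simp_rw [hre]
      rw [MeasureTheory.integral_const_mul]
      have heq : ∫ s in Ioc x x₀, (Ioi t).indicator f s = A t := by
        rw [MeasureTheory.integral_indicator measurableSet_Ioi, Measure.restrict_restrict measurableSet_Ioi,
          hA]
        simp only
        congr 1
        rw [inter_comm, Ioc_inter_Ioi, sup_eq_right.mpr (le_of_lt ht.1)]
      rw [heq]; ring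
    -- right iterated integral
    have hright : (∫ s, (∫ t, F (t, s) ∂μ) ∂μ)
        = ∫ s in Ioc x x₀, f s * (A x ^ (k+1) - A s ^ (k+1)) / (k+1) := by
      rw [hμ]
      refine setIntegral_congr_fun measurableSet_Ioc fun s hs => ?_
      have hre : ∀ t, F (t, s) = f s * ((Iio s).indicator (fun t => f t * A t ^ k) t) := by
        intro t
        rw [hF]
        simp only
        by_cases h : t < s
        · rw [indicator_of_mem (by exact h), indicator_of_mem (by exact h)]
          ring
        · rw [indicator_of_notMem (by exact h), indicator_of_notMem (by exact h)]
          ring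
      simp_rw [hre]
      rw [MeasureTheory.integral_const_mul]
      have hset : Ioc x x₀ ∩ Iio s = Ioo x s := by
        ext t
        simp only [mem_inter_iff, mem_Ioc, mem_Iio, mem_Ioo]
        constructor
        · rintro ⟨⟨h1, h2⟩, h3⟩; exact ⟨h1, h3⟩
        · rintro ⟨h1, h3⟩; exact ⟨⟨h1, le_trans (le_of_lt h3) hs.2⟩, h3⟩
      have heq : ∫ t in Ioc x x₀, (Iio s).indicator (fun t => f t * A t ^ k) t
          = (A x ^ (k+1) - A s ^ (k+1)) / (k+1) := by
        rw [MeasureTheory.integral_indicator measurableSet_Iio,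
          Measure.restrict_restrict measurableSet_Iio, inter_comm (Iio s), hset,
          ← integral_Ioc_eq_integral_Ioo]
        have ih' : ∀ y, y ≤ x₀ →
            ∫ t in Ioc y x₀, f t * A t ^ k = A y ^ (k+1) / (k+1) := ih
        have hsplit : (∫ t in Ioc x x₀, f t * A t ^ k)
            = (∫ t in Ioc x s, f t * A t ^ k) + ∫ t in Ioc s x₀, f t * A t ^ k := by
          rw [← setIntegral_union (Ioc_disjoint_Ioc_of_le le_rfl) measurableSet_Ioc
            ((hIk k x).mono_set (Ioc_subset_Ioc_right hs.2)) (hIk k s),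
            Ioc_union_Ioc_eq_Ioc (le_of_lt hs.1) hs.2]
        have e1 := ih' x hx
        have e2 := ih' s hs.2
        rw [e1, e2] at hsplit
        rw [sub_div]
        linarith
      rw [heq]
      ring
    -- swap and conclude
    have hswap : (∫ t, (∫ s, F (t, s) ∂μ) ∂μ) = ∫ s, (∫ t, F (t, s) ∂μ) ∂μ :=
      integral_integral_swap hFint
    have hkey : (∫ t in Ioc x x₀, f t * A t ^ (k + 1))
        = ∫ s in Ioc x x₀, f s * (A x ^ (k+1) - A s ^ (k+1)) / (k+1) := by
      rw [← hleft, hswap, hright]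
    have hexp : (∫ s in Ioc x x₀, f s * (A x ^ (k+1) - A s ^ (k+1)) / (k+1))
        = (A x * (A x ^ (k+1)) - (∫ t in Ioc x x₀, f t * A t ^ (k + 1))) / (k+1) := by
      have hc : ∀ s : ℝ, f s * (A x ^ (k+1) - A s ^ (k+1)) / (k+1)
          = (f s * A x ^ (k+1)) / (k+1) - (f s * A s ^ (k+1)) / (k+1) := by
        intro s; ring
      simp_rw [hc]
      rw [integral_sub (((hf.integrableOn).mul_const _).div_const _)
        ((hIk (k+1) x).div_const _)]
      rw [MeasureTheory.integral_div, MeasureTheory.integral_div,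
        MeasureTheory.integral_mul_const]
      rw [sub_div, hA]
    have hfinal : (∫ t in Ioc x x₀, f t * A t ^ (k + 1))
        = A x ^ (k + 1 + 1) / ((k:ℝ) + 1 + 1) := by
      have hk1 : ((k:ℝ) + 1) ≠ 0 := by positivity
      have hk2 : ((k:ℝ) + 1 + 1) ≠ 0 := by positivity
      have hI := hkey.trans hexp
      rw [eq_div_iff hk1] at hI
      rw [eq_div_iff hk2, pow_succ]
      ring_nf at hI ⊢
      linarith
    show (∫ t in Ioc x x₀, f t * A t ^ (k + 1)) = A x ^ (k + 1 + 1) / (↑(k+1) + 1)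
    rw [hfinal]
    push_cast
    ring_nf

/-- Iteration estimate for the Volterra series of the limit-point analysis at `x = 0`:
`|θ_k(x)| ≤ x^{1/2-γ} (1/k!) ((1/(2γ)) ∫₀^{x₀} t|Ṽ(t)| dt)^k`. -/
theorem volterra_iteration_estimate (γ b x₀ : ℝ) (hγ : 1 ≤ γ) (hb : 0 < b)
    (hx₀ : x₀ ∈ Ioo 0 b) (V : ℝ → ℝ) (hmeas : Measurable V)
    (hint : IntegrableOn (fun t => t * |V t|) (Ioc 0 b))
    (θ : ℕ → ℝ → ℝ)
    (hθ0 : ∀ x : ℝ, θ 0 x = x ^ ((1 : ℝ) / 2 - γ))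
    (hθ : ∀ (k : ℕ) (x : ℝ), θ (k + 1) x = (1 / (2 * γ)) *
      ∫ t in x₀..x,
        (x ^ ((1 : ℝ) / 2 + γ) * t ^ ((1 : ℝ) / 2 - γ) -
          x ^ ((1 : ℝ) / 2 - γ) * t ^ ((1 : ℝ) / 2 + γ)) * V t * θ k t) :
    ∀ x ∈ Ioo 0 x₀, ∀ k : ℕ,
      |θ k x| ≤ x ^ ((1 : ℝ) / 2 - γ) * (1 / (Nat.factorial k : ℝ)) *
        ((1 / (2 * γ)) * ∫ t in (0 : ℝ)..x₀, t * |V t|) ^ k := by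
  obtain ⟨hx₀0, hx₀b⟩ := hx₀
  have hγ0 : (0:ℝ) < 2 * γ := by linarith
  set c : ℝ := 1 / (2 * γ) with hc
  have hc0 : 0 < c := by positivity
  set f : ℝ → ℝ := (Ioc 0 x₀).indicator (fun t => t * |V t|) with hf
  have hfm : Measurable f :=
    (measurable_id.mul hmeas.abs).indicator measurableSet_Ioc
  have hsub : Ioc 0 x₀ ⊆ Ioc 0 b := Ioc_subset_Ioc_right hx₀b.le
  have hfint : Integrable f :=
    (hint.mono_set hsub).integrable_indicator measurableSet_Ioc
  have hf0 : ∀ t, 0 ≤ f t := fun t =>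
    indicator_nonneg (fun s hs => mul_nonneg hs.1.le (abs_nonneg _)) t
  set A : ℝ → ℝ := fun t => ∫ s in Ioc t x₀, f s with hA
  have key : ∀ k : ℕ, ∀ x ≤ x₀,
      ∫ t in Ioc x x₀, f t * A t ^ k = A x ^ (k + 1) / (k + 1) :=
    volterra_key f hfm hfint hf0 x₀
  have hanti : Antitone A := fun t₁ t₂ h =>
    setIntegral_mono_set hfint.integrableOn (Filter.Eventually.of_forall hf0)
      (HasSubset.Subset.eventuallyLE (Ioc_subset_Ioc_left h))
  have hA0 : ∀ t, 0 ≤ A t := fun t => setIntegral_nonneg measurableSet_Ioc fun s _ => hf0 s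
  have hAbd : ∀ t, A t ≤ ∫ s, f s := fun t =>
    setIntegral_le_integral hfint (Filter.Eventually.of_forall hf0)
  have hfeq : ∀ x : ℝ, 0 ≤ x → ∀ t ∈ Ioc x x₀, f t = t * |V t| := by
    intro x hx t ht
    exact indicator_of_mem (show t ∈ Ioc 0 x₀ from ⟨lt_of_le_of_lt hx ht.1, ht.2⟩) _
  have htarget : (∫ t in (0:ℝ)..x₀, t * |V t|) = A 0 := by
    rw [intervalIntegral.integral_of_le hx₀0.le, hA]
    exact (setIntegral_congr_fun measurableSet_Ioc fun t ht =>
      (hfeq 0 le_rfl t ht)).symm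
  have main : ∀ k : ℕ, ∀ x ∈ Ioo 0 x₀,
      |θ k x| ≤ x ^ ((1:ℝ)/2 - γ) * (c * A x) ^ k / (Nat.factorial k : ℝ) := by
    intro k
    induction k with
    | zero =>
      intro x hx
      rw [hθ0, abs_of_pos (Real.rpow_pos_of_pos hx.1 _)]
      simp
    | succ k ih =>
      intro x hx
      have hx0 : 0 < x := hx.1
      have hxx : x < x₀ := hx.2
      set g : ℝ → ℝ := fun t => x ^ ((1:ℝ)/2 - γ) * (t * |V t|) *
        (c ^ k * A t ^ k / (Nat.factorial k : ℝ)) with hg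
      have hIoc : Set.uIoc x x₀ = Ioc x x₀ := uIoc_of_le hxx.le
      have hbd : ∀ᵐ t ∂(volume.restrict (Set.uIoc x x₀)),
          ‖(x ^ ((1 : ℝ) / 2 + γ) * t ^ ((1 : ℝ) / 2 - γ) -
            x ^ ((1 : ℝ) / 2 - γ) * t ^ ((1 : ℝ) / 2 + γ)) * V t * θ k t‖ ≤ g t := by
        rw [hIoc]
        have hne0 : ∀ᵐ t : ℝ, t ≠ x₀ := by
          rw [MeasureTheory.ae_iff]
          simp only [not_not, setOf_eq_eq_singleton]
          exact measure_singleton x₀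
        have hne : ∀ᵐ t : ℝ ∂(volume.restrict (Ioc x x₀)), t ≠ x₀ :=
          ae_restrict_of_ae hne0
        filter_upwards [ae_restrict_mem measurableSet_Ioc, hne] with t ht htne
        have ht0 : 0 < t := lt_trans hx0 ht.1
        have htx₀ : t < x₀ := lt_of_le_of_ne ht.2 htne
        set a : ℝ := (1:ℝ)/2 + γ with ha
        set b' : ℝ := (1:ℝ)/2 - γ with hb'
        have hker : |x ^ a * t ^ b' - x ^ b' * t ^ a| ≤ x ^ b' * t ^ a := by
          have h1 : x ^ a * t ^ b' ≤ x ^ b' * t ^ a := by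
            have hxa : x ^ a = x ^ b' * x ^ (2*γ) := by
              rw [← Real.rpow_add hx0]; ring_nf; congr 1; rw [ha, hb']; ring
            have hta : t ^ a = t ^ b' * t ^ (2*γ) := by
              rw [← Real.rpow_add ht0]; ring_nf; congr 1; rw [ha, hb']; ring
            rw [hxa, hta]
            have h2 : x ^ (2*γ) ≤ t ^ (2*γ) :=
              Real.rpow_le_rpow hx0.le ht.1.le (by linarith)
            have h2' : x ^ (2*γ) * t ^ b' ≤ t ^ (2*γ) * t ^ b' :=
              mul_le_mul_of_nonneg_right h2 (Real.rpow_nonneg ht0.le b')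
            calc x ^ b' * x ^ (2*γ) * t ^ b'
                = x ^ b' * (x ^ (2*γ) * t ^ b') := by ring
              _ ≤ x ^ b' * (t ^ (2*γ) * t ^ b') :=
                  mul_le_mul_of_nonneg_left h2' (Real.rpow_nonneg hx0.le b')
              _ = x ^ b' * (t ^ b' * t ^ (2*γ)) := by ring
          have h0a : (0:ℝ) ≤ x ^ a * t ^ b' := by positivity
          rw [abs_sub_comm, abs_of_nonneg (by linarith)]
          linarith
        have hθk := ih t ⟨ht0, htx₀⟩
        have hta : t ^ a * t ^ b' = t := by
          rw [← Real.rpow_add ht0, ha, hb']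
          norm_num
        rw [Real.norm_eq_abs, abs_mul, abs_mul]
        calc |x ^ a * t ^ b' - x ^ b' * t ^ a| * |V t| * |θ k t|
            ≤ (x ^ b' * t ^ a) * |V t| *
              (t ^ b' * (c * A t) ^ k / (Nat.factorial k : ℝ)) := by
              gcongr
          _ = g t := by
              rw [hg]
              simp only
              rw [mul_pow]
              have hre : x ^ b' * t ^ a * |V t| *
                    (t ^ b' * (c ^ k * A t ^ k) / (Nat.factorial k : ℝ))
                  = x ^ b' * ((t ^ a * t ^ b') * |V t|) *
                    (c ^ k * A t ^ k / (Nat.factorial k : ℝ)) := by ring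
              rw [hre, hta]
      have hgint : IntervalIntegrable g volume x x₀ := by
        rw [intervalIntegrable_iff, hIoc]
        have h1 : IntegrableOn (fun t => x ^ ((1:ℝ)/2 - γ) * (t * |V t|)) (Ioc x x₀) :=
          (hint.mono_set (Ioc_subset_Ioc hx0.le hx₀b.le)).const_mul _
        have h2 := h1.bdd_mul
          (f := fun t => c ^ k * A t ^ k / (Nat.factorial k : ℝ))
          (((hanti.measurable.pow_const k).const_mul _).div_const _).aestronglyMeasurable
          (c := c ^ k * (∫ s, f s) ^ k / (Nat.factorial k : ℝ)) (Filter.Eventually.of_forall fun t => by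
            rw [Real.norm_eq_abs, abs_div, abs_mul, abs_pow, abs_pow,
              abs_of_nonneg (hA0 t), abs_of_pos hc0,
              abs_of_nonneg (by positivity : (0:ℝ) ≤ (Nat.factorial k : ℝ))]
            gcongr
            · exact hA0 t
            · exact hAbd t)
        exact h2.congr (Filter.Eventually.of_forall fun t => by rw [hg]; ring)
      have hgval : (∫ t in x..x₀, g t) =
          x ^ ((1:ℝ)/2 - γ) * c ^ k / (Nat.factorial k : ℝ) * (A x ^ (k+1) / (k+1)) := by
        rw [intervalIntegral.integral_of_le hxx.le]
        have hcg : ∀ t ∈ Ioc x x₀, g t =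
            (x ^ ((1:ℝ)/2 - γ) * c ^ k / (Nat.factorial k : ℝ)) * (f t * A t ^ k) := by
          intro t ht
          rw [hg, hfeq x hx0.le t ht]
          ring
        rw [setIntegral_congr_fun measurableSet_Ioc hcg, MeasureTheory.integral_const_mul,
          key k x hxx.le]
      have hest := intervalIntegral.norm_integral_le_abs_of_norm_le hbd hgint
      rw [Real.norm_eq_abs] at hest
      rw [hθ k x, intervalIntegral.integral_symm x x₀, abs_mul, abs_neg, abs_of_pos hc0]
      refine le_trans (mul_le_mul_of_nonneg_left hest hc0.le) (le_of_eq ?_)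
      rw [hgval, abs_of_nonneg (by
        have := hA0 x
        have := Real.rpow_pos_of_pos hx0 ((1:ℝ)/2 - γ)
        positivity)]
      rw [Nat.factorial_succ, mul_pow]
      have hkf : (Nat.factorial k : ℝ) ≠ 0 := by positivity
      have hk1 : ((k:ℝ) + 1) ≠ 0 := by positivity
      push_cast
      field_simp
      ring
  intro x hx k
  refine le_trans (main k x hx) ?_
  rw [htarget]
  have hAx : c * A x ≤ c * A 0 :=
    mul_le_mul_of_nonneg_left (hanti hx.1.le) hc0.le
  calc x ^ ((1:ℝ)/2 - γ) * (c * A x) ^ k / (Nat.factorial k : ℝ)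
      ≤ x ^ ((1:ℝ)/2 - γ) * (c * A 0) ^ k / (Nat.factorial k : ℝ) := by
        gcongr
        · exact Real.rpow_nonneg hx.1.le _
        · exact mul_nonneg hc0.le (hA0 x)
    _ = x ^ ((1:ℝ)/2 - γ) * (1 / (Nat.factorial k : ℝ)) * (c * A 0) ^ k := by
        ring
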